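/- Let 𝒢 be a pseudogroup of local homeomorphisms of a compact metric space T, finitely generated by a finite set K (closed under inverses, containing the identity), and suppose 𝒢 is expansive with constant e: for all distinct x, y ∈ T lying in a common domain, there exists g ∈ 𝒢 with x, y ∈ dom(g) and d(g(x), g(y)) > e. Then 𝒢 is uniformly expansive: for every ε > 0 there exists N ∈ ℕ such that whenever d(x,y) ≥ ε (x, y in a common transversal component), there exists g ∈ 𝒢 with word length #g ≤ N (composition of at most N elements of K), x, y ∈ dom(g), and d(g(x), g(y)) > e. -/

import Mathlib

/-- `IsWord K n g` means that the local homeomorphism `g` is a composition of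
at most `n` elements of the generating set `K` (pseudogroup word length ≤ n). -/
def IsWord {T : Type*} [TopologicalSpace T]
    (K : Set (OpenPartialHomeomorph T T)) : ℕ → OpenPartialHomeomorph T T → Prop
  | 0, g => g = OpenPartialHomeomorph.refl T
  | n + 1, g => IsWord K n g ∨ ∃ h ∈ K, ∃ g', IsWord K n g' ∧ g = g'.trans h

theorem isWord_mono {T : Type*} [TopologicalSpace T]
    (K : Set (OpenPartialHomeomorph T T)) {n m : ℕ} {g : OpenPartialHomeomorph T T}
    (h : IsWord K n g) (hnm : n ≤ m) : IsWord K m g := by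
  induction m, hnm using Nat.le_induction with
  | base => exact h
  | succ m hm ih => exact Or.inl ih

/-- A finitely generated expansive pseudogroup of local
homeomorphisms of a compact metric space is uniformly expansive. -/
theorem stmt_10 {T : Type*} [MetricSpace T] [CompactSpace T]
    (K : Set (OpenPartialHomeomorph T T)) (hKfin : K.Finite)
    (hKid : OpenPartialHomeomorph.refl T ∈ K) (hKinv : ∀ g ∈ K, g.symm ∈ K)
    (e : ℝ) (he : 0 < e)
    (hexp : ∀ x y : T, x ≠ y → ∃ (n : ℕ) (g : OpenPartialHomeomorph T T),
      IsWord K n g ∧ x ∈ g.source ∧ y ∈ g.source ∧ e < dist (g x) (g y)) :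
    ∀ ε > (0 : ℝ), ∃ N : ℕ, ∀ x y : T, ε ≤ dist x y →
      ∃ g : OpenPartialHomeomorph T T, IsWord K N g ∧
        x ∈ g.source ∧ y ∈ g.source ∧ e < dist (g x) (g y) := by
  intro ε hε
  set S : Set (T × T) := {p | ε ≤ dist p.1 p.2} with hS
  have hSclosed : IsClosed S :=
    isClosed_le continuous_const (continuous_fst.dist continuous_snd)
  have hScompact : IsCompact S := hSclosed.isCompact
  -- choose data for each point of S
  have hchoice : ∀ p : S, ∃ (n : ℕ) (g : OpenPartialHomeomorph T T),
      IsWord K n g ∧ (p : T × T).1 ∈ g.source ∧ (p : T × T).2 ∈ g.source ∧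
      e < dist (g (p : T × T).1) (g (p : T × T).2) := by
    intro p
    have hne : (p : T × T).1 ≠ (p : T × T).2 := by
      intro h
      have := p.2
      simp only [hS, Set.mem_setOf_eq, h, dist_self] at this
      linarith
    exact hexp _ _ hne
  choose n g hw hs1 hs2 hd using hchoice
  -- open sets
  set U : S → Set (T × T) := fun p =>
    ((g p).source ×ˢ (g p).source) ∩
      ((fun q : T × T => dist (g p q.1) (g p q.2)) ⁻¹' Set.Ioi e) with hU
  have hUopen : ∀ p, IsOpen (U p) := by
    intro p
    have hcont : ContinuousOn (fun q : T × T => dist (g p q.1) (g p q.2))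
        ((g p).source ×ˢ (g p).source) := by
      have h1 : ContinuousOn (fun q : T × T => g p q.1)
          ((g p).source ×ˢ (g p).source) :=
        (g p).continuousOn.comp continuousOn_fst fun q hq => hq.1
      have h2 : ContinuousOn (fun q : T × T => g p q.2)
          ((g p).source ×ˢ (g p).source) :=
        (g p).continuousOn.comp continuousOn_snd fun q hq => hq.2
      exact continuous_dist.comp_continuousOn (h1.prodMk h2)
    exact hcont.isOpen_inter_preimage ((g p).open_source.prod (g p).open_source)
      isOpen_Ioi
  have hcover : S ⊆ ⋃ p : S, U p := by
    intro q hq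
    exact Set.mem_iUnion.2 ⟨⟨q, hq⟩, ⟨⟨hs1 _, hs2 _⟩, hd _⟩⟩
  obtain ⟨t, ht⟩ := hScompact.elim_finite_subcover U hUopen hcover
  refine ⟨t.sup n, ?_⟩
  intro x y hxy
  have hmem : (x, y) ∈ S := hxy
  obtain ⟨p, hp, hpx⟩ := Set.mem_iUnion₂.1 (ht hmem)
  exact ⟨g p, isWord_mono K (hw p) (Finset.le_sup hp), hpx.1.1, hpx.1.2, hpx.2⟩
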